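/- Let Z ∼ N₂(0, Σ) in ℝ² and let T ⊆ ℝ² be a measurable set that is symmetric with respect to both coordinate axes and such that every intersection of T with a horizontal or vertical line is an interval. Assume Σ is diagonal. Then for each fixed μ₁, the function μ₂ ↦ P(Z + (μ₁, μ₂) ∈ T) is non-increasing on [0, ∞), and symmetrically in the other coordinate. -/

import Mathlib

open MeasureTheory ProbabilityTheory Set
open scoped NNReal

section Aux

lemma gaussAux_continuous (v : ℝ≥0) : Continuous (gaussianPDFReal 0 v) := by
  rw [gaussianPDFReal_def]
  fun_prop

lemma gaussAux_even (v : ℝ≥0) (x : ℝ) :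
    gaussianPDFReal 0 v (-x) = gaussianPDFReal 0 v x := by
  simp [gaussianPDFReal, neg_sq]

lemma gaussAux_anti {v : ℝ≥0} (hv : v ≠ 0) {x y : ℝ} (hx : 0 ≤ x) (hxy : x ≤ y) :
    gaussianPDFReal 0 v y ≤ gaussianPDFReal 0 v x := by
  have hvpos : (0:ℝ) < 2 * v := by positivity
  simp only [gaussianPDFReal, sub_zero]
  apply mul_le_mul_of_nonneg_left _ (by positivity)
  apply Real.exp_le_exp.mpr
  have hsq : x ^ 2 ≤ y ^ 2 := by nlinarith
  rw [neg_div, neg_div, neg_le_neg_iff]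
  exact div_le_div_of_nonneg_right hsq hvpos.le

/-- Monotonicity of the gaussian measure of a sliding interval of fixed length. -/
lemma gaussAux_interval_anti {v : ℝ≥0} (hv : v ≠ 0) {r a b : ℝ}
    (hr : 0 ≤ r) (ha : 0 ≤ a) (hab : a ≤ b) :
    ∫ x in (-r - b)..(r - b), gaussianPDFReal 0 v x ≤
      ∫ x in (-r - a)..(r - a), gaussianPDFReal 0 v x := by
  set f := gaussianPDFReal 0 v with hf
  have hcont : Continuous f := gaussAux_continuous v
  have hint : ∀ p q : ℝ, IntervalIntegrable f volume p q :=
    fun p q => (integrable_gaussianPDFReal 0 v).intervalIntegrable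
  set G : ℝ → ℝ := fun μ => (∫ x in (0:ℝ)..(r - μ), f x) - ∫ x in (0:ℝ)..(-r - μ), f x
    with hG
  have hH : ∀ t : ℝ, HasDerivAt (fun u => ∫ x in (0:ℝ)..u, f x) (f t) t := fun t =>
    intervalIntegral.integral_hasDerivAt_right (hint 0 t)
      hcont.stronglyMeasurable.stronglyMeasurableAtFilter hcont.continuousAt
  have hGderiv : ∀ μ : ℝ, HasDerivAt G (f (-r - μ) - f (r - μ)) μ := by
    intro μ
    have h1 : HasDerivAt (fun μ : ℝ => r - μ) (-1) μ := by
      simpa using (hasDerivAt_id' μ).const_sub r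
    have h2 : HasDerivAt (fun μ : ℝ => -r - μ) (-1) μ := by
      simpa using (hasDerivAt_id' μ).const_sub (-r)
    have d1 := (hH (r - μ)).comp μ h1
    have d2 := (hH (-r - μ)).comp μ h2
    have := d1.sub d2
    have e : f (-r - μ) - f (r - μ) = f (r - μ) * -1 - f (-r - μ) * -1 := by ring
    rw [e]
    exact this
  have hderiv_nonpos : ∀ μ : ℝ, 0 ≤ μ → f (-r - μ) - f (r - μ) ≤ 0 := by
    intro μ hμ
    have h1 : f (-r - μ) = f (r + μ) := by
      rw [show -r - μ = -(r + μ) by ring, hf, gaussAux_even]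
    have h2 : f (r + μ) ≤ f (r - μ) := by
      rcases le_total μ r with h | h
      · exact gaussAux_anti hv (by linarith) (by linarith)
      · have : f (r - μ) = f (μ - r) := by
          rw [show r - μ = -(μ - r) by ring, hf, gaussAux_even]
        rw [this]
        exact gaussAux_anti hv (by linarith) (by linarith)
    linarith [h1 ▸ h2]
  have hanti : AntitoneOn G (Ici (0:ℝ)) := by
    apply antitoneOn_of_deriv_nonpos (convex_Ici 0)
    · exact fun x _ => ((hGderiv x).continuousAt).continuousWithinAt
    · intro x hx
      exact (hGderiv x).differentiableAt.differentiableWithinAt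
    · intro x hx
      rw [interior_Ici] at hx
      rw [(hGderiv x).deriv]
      exact hderiv_nonpos x (le_of_lt hx)
  have hGab : G b ≤ G a := hanti (mem_Ici.mpr ha) (mem_Ici.mpr (ha.trans hab)) hab
  have hsplit : ∀ μ : ℝ, (∫ x in (-r - μ)..(r - μ), f x) = G μ := by
    intro μ
    have h := intervalIntegral.integral_add_adjacent_intervals
      (hint (-r - μ) 0) (hint 0 (r - μ))
    have hsym : (∫ x in (-r - μ)..(0:ℝ), f x) = -∫ x in (0:ℝ)..(-r - μ), f x :=
      intervalIntegral.integral_symm _ _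
    rw [hG]
    rw [← h, hsym]
    ring
  rw [hsplit a, hsplit b] at *
  exact hGab

/-- One-dimensional Anderson inequality for a symmetric order-convex set. -/
lemma gaussAux_oneD {v : ℝ≥0} (hv : v ≠ 0) (S : Set ℝ)
    (hsym : ∀ y ∈ S, -y ∈ S)
    (hconv : ∀ y₁ y₂ y₃ : ℝ, y₁ ≤ y₂ → y₂ ≤ y₃ → y₁ ∈ S → y₃ ∈ S → y₂ ∈ S)
    {a b : ℝ} (ha : 0 ≤ a) (hab : a ≤ b) :
    gaussianReal 0 v {y | y + b ∈ S} ≤ gaussianReal 0 v {y | y + a ∈ S} := by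
  set γ := gaussianReal 0 v with hγ
  rcases S.eq_empty_or_nonempty with hS | hne
  · have : {y : ℝ | y + b ∈ S} = ∅ := by
      ext y; simp [hS]
    rw [this]
    simp
  by_cases hbdd : BddAbove S
  · -- bounded case
    set r := sSup S with hr
    have h0S : (0:ℝ) ∈ S := by
      obtain ⟨y, hy⟩ := hne
      have hny := hsym y hy
      rcases le_total y 0 with h | h
      · exact hconv y 0 (-y) h (by linarith) hy hny
      · exact hconv (-y) 0 y (by linarith) h hny hy
    have hr0 : 0 ≤ r := le_csSup hbdd h0S
    have hsub2 : ∀ μ : ℝ, {y : ℝ | y + μ ∈ S} ⊆ Icc (-r - μ) (r - μ) := by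
      intro μ y hy
      simp only [mem_setOf_eq] at hy
      have h1 : y + μ ≤ r := le_csSup hbdd hy
      have h2 : -(y + μ) ≤ r := le_csSup hbdd (hsym _ hy)
      constructor <;> [linarith; linarith]
    have hsub1 : ∀ μ : ℝ, Ioo (-r - μ) (r - μ) ⊆ {y : ℝ | y + μ ∈ S} := by
      intro μ y hy
      obtain ⟨h1, h2⟩ := hy
      have habs : |y + μ| < r := abs_lt.mpr ⟨by linarith, by linarith⟩
      obtain ⟨z, hz, hlt⟩ := exists_lt_of_lt_csSup hne habs
      have hnz := hsym z hz
      have h3 : -z ≤ y + μ := by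
        have := neg_abs_le (y + μ); linarith
      have h4 : y + μ ≤ z := by
        have := le_abs_self (y + μ); linarith
      exact hconv (-z) (y + μ) z h3 h4 hnz hz
    have hsing : ∀ x : ℝ, γ {x} = 0 := fun x =>
      (gaussianReal_absolutelyContinuous 0 hv) Real.volume_singleton
    have hIooIcc : ∀ p q : ℝ, γ (Ioo p q) = γ (Icc p q) := fun p q =>
      measure_congr (MeasureTheory.Ioo_ae_eq_Icc' (hsing p) (hsing q))
    have hkey : ∀ μ : ℝ, 0 ≤ μ → γ {y : ℝ | y + μ ∈ S} =
        ENNReal.ofReal (∫ x in (-r - μ)..(r - μ), gaussianPDFReal 0 v x) := by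
      intro μ hμ
      have hle : -r - μ ≤ r - μ := by linarith
      have heq : γ {y : ℝ | y + μ ∈ S} = γ (Ioo (-r - μ) (r - μ)) := by
        apply le_antisymm
        · calc γ {y : ℝ | y + μ ∈ S} ≤ γ (Icc (-r - μ) (r - μ)) :=
                measure_mono (hsub2 μ)
          _ = γ (Ioo (-r - μ) (r - μ)) := (hIooIcc _ _).symm
        · exact measure_mono (hsub1 μ)
      rw [heq, hγ, gaussianReal_apply_eq_integral 0 hv,
        ← MeasureTheory.integral_Ioc_eq_integral_Ioo,
        ← intervalIntegral.integral_of_le hle]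
    rw [hkey a ha, hkey b (le_trans ha hab)]
    exact ENNReal.ofReal_le_ofReal (gaussAux_interval_anti hv hr0 ha hab)
  · -- unbounded: S = univ
    have hall : ∀ z : ℝ, z ∈ S := by
      intro z
      rw [not_bddAbove_iff] at hbdd
      obtain ⟨w, hw, hgt⟩ := hbdd |z|
      have hnw := hsym w hw
      have h1 : -w ≤ z := by
        have := neg_abs_le z; linarith
      have h2 : z ≤ w := by
        have := le_abs_self z; linarith
      exact hconv (-w) z w h1 h2 hnw hw
    have h1 : {y : ℝ | y + b ∈ S} = {y : ℝ | y + a ∈ S} := by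
      ext y; simp [hall]
    rw [h1]

end Aux

/-- Two-dimensional Anderson-type monotonicity: if `Z = (Z₁, Z₂)` are independent centered
Gaussians (diagonal covariance), and `T ⊆ ℝ²` is measurable, symmetric with respect to both
coordinate axes, and every horizontal or vertical section of `T` is an interval, then for each
fixed `μ₁` the map `μ₂ ↦ P(Z + (μ₁, μ₂) ∈ T)` is non-increasing on `[0,∞)`, and symmetrically
in the other coordinate. -/
theorem two_dim_anderson {Ω : Type*} [MeasurableSpace Ω]
    (P : Measure Ω) [IsProbabilityMeasure P]
    (Z₁ Z₂ : Ω → ℝ) (hZ₁ : Measurable Z₁) (hZ₂ : Measurable Z₂)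
    {σ₁ σ₂ : ℝ≥0} (hσ₁ : 0 < σ₁) (hσ₂ : 0 < σ₂)
    (hlaw₁ : P.map Z₁ = gaussianReal 0 (σ₁ ^ 2))
    (hlaw₂ : P.map Z₂ = gaussianReal 0 (σ₂ ^ 2))
    (hindep : ProbabilityTheory.IndepFun Z₁ Z₂ P)
    (T : Set (ℝ × ℝ)) (hTmeas : MeasurableSet T)
    (hsymm₁ : ∀ x y : ℝ, (x, y) ∈ T ↔ (-x, y) ∈ T)
    (hsymm₂ : ∀ x y : ℝ, (x, y) ∈ T ↔ (x, -y) ∈ T)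
    (hvert : ∀ x y₁ y₂ y₃ : ℝ, y₁ ≤ y₂ → y₂ ≤ y₃ →
      (x, y₁) ∈ T → (x, y₃) ∈ T → (x, y₂) ∈ T)
    (hhoriz : ∀ y x₁ x₂ x₃ : ℝ, x₁ ≤ x₂ → x₂ ≤ x₃ →
      (x₁, y) ∈ T → (x₃, y) ∈ T → (x₂, y) ∈ T) :
    (∀ μ₁ : ℝ, ∀ a b : ℝ, 0 ≤ a → a ≤ b →
        P {ω | (Z₁ ω + μ₁, Z₂ ω + b) ∈ T} ≤ P {ω | (Z₁ ω + μ₁, Z₂ ω + a) ∈ T}) ∧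
    (∀ μ₂ : ℝ, ∀ a b : ℝ, 0 ≤ a → a ≤ b →
        P {ω | (Z₁ ω + b, Z₂ ω + μ₂) ∈ T} ≤ P {ω | (Z₁ ω + a, Z₂ ω + μ₂) ∈ T}) := by
  have hv₁ : (σ₁ ^ 2 : ℝ≥0) ≠ 0 := pow_ne_zero _ hσ₁.ne'
  have hv₂ : (σ₂ ^ 2 : ℝ≥0) ≠ 0 := pow_ne_zero _ hσ₂.ne'
  set γ₁ := gaussianReal 0 (σ₁ ^ 2) with hγ₁
  set γ₂ := gaussianReal 0 (σ₂ ^ 2) with hγ₂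
  have hmap : P.map (fun ω => (Z₁ ω, Z₂ ω)) = γ₁.prod γ₂ := by
    rw [← hlaw₁, ← hlaw₂]
    exact (ProbabilityTheory.indepFun_iff_map_prod_eq_prod_map_map
      hZ₁.aemeasurable hZ₂.aemeasurable).mp hindep
  have hsmeas : ∀ μ₁ μ₂ : ℝ,
      MeasurableSet ((fun p : ℝ × ℝ => (p.1 + μ₁, p.2 + μ₂)) ⁻¹' T) := by
    intro μ₁ μ₂
    exact hTmeas.preimage (by fun_prop)
  have hPeq : ∀ μ₁ μ₂ : ℝ, P {ω | (Z₁ ω + μ₁, Z₂ ω + μ₂) ∈ T} =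
      γ₁.prod γ₂ ((fun p : ℝ × ℝ => (p.1 + μ₁, p.2 + μ₂)) ⁻¹' T) := by
    intro μ₁ μ₂
    have : {ω | (Z₁ ω + μ₁, Z₂ ω + μ₂) ∈ T} =
        (fun ω => (Z₁ ω, Z₂ ω)) ⁻¹' ((fun p : ℝ × ℝ => (p.1 + μ₁, p.2 + μ₂)) ⁻¹' T) := rfl
    rw [this, ← Measure.map_apply (hZ₁.prodMk hZ₂) (hsmeas μ₁ μ₂), hmap]
  constructor
  · intro μ₁ a b ha hab
    rw [hPeq μ₁ a, hPeq μ₁ b,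
      Measure.prod_apply (hsmeas μ₁ b), Measure.prod_apply (hsmeas μ₁ a)]
    apply lintegral_mono
    intro x
    have h := gaussAux_oneD hv₂ {y : ℝ | (x + μ₁, y) ∈ T}
      (fun y hy => (hsymm₂ (x + μ₁) y).mp hy)
      (fun y₁ y₂ y₃ h12 h23 h1 h3 => hvert (x + μ₁) y₁ y₂ y₃ h12 h23 h1 h3) ha hab
    exact h
  · intro μ₂ a b ha hab
    rw [hPeq a μ₂, hPeq b μ₂,
      Measure.prod_apply_symm (hsmeas b μ₂), Measure.prod_apply_symm (hsmeas a μ₂)]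
    apply lintegral_mono
    intro y
    have h := gaussAux_oneD hv₁ {x : ℝ | (x, y + μ₂) ∈ T}
      (fun x hx => (hsymm₁ x (y + μ₂)).mp hx)
      (fun x₁ x₂ x₃ h12 h23 h1 h3 => hhoriz (y + μ₂) x₁ x₂ x₃ h12 h23 h1 h3) ha hab
    exact h
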